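/- For any partition λ = (m^N) (all parts equal to m ≥ 0), the eigenvalue of the Koornwinder difference operator D is d_{(m^N)} = Σ_{i=1}^N [t_0 t_N t^{2N-i-1}(s^m - 1) + t^{i-1}(s^{-m}-1)], and upon substituting s = ξ^{1/m} this equals d_0(ξ) = ((1-t^N)/(1-t)) (ξ-1)(t_0 t_N t^{N-1} - 1/ξ); moreover d_0(ξ) is invariant under the Gallavotti–Cohen substitution ξ → ξ' = t_0^{-1}t_N^{-1}t^{-(N-1)}ξ^{-1}, i.e. d_0(ξ') = d_0(ξ). -/
import Mathlib


open Finset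

/-- The eigenvalue of the Koornwinder difference operator `D` for a partition
`λ`: `d_λ = Σ_{i=1}^N [t_0 t_N t^{2N-i-1}(s^{λ_i} - 1) + t^{i-1}(s^{-λ_i} - 1)]`,
written here for `λ = (m^N)` with the index shifted to `i ∈ {0,…,N-1}`. -/
noncomputable def dEig (N : ℕ) (t t0 tN s : ℂ) (m : ℕ) : ℂ :=
  ∑ i ∈ range N,
    (t0 * tN * t ^ (2 * N - i - 2) * (s ^ m - 1) + t ^ i * ((s ^ m)⁻¹ - 1))

/-- The limiting eigenvalue
`d₀(ξ) = ((1 - t^N)/(1 - t)) (ξ - 1)(t_0 t_N t^{N-1} - 1/ξ)`. -/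
noncomputable def dZero (N : ℕ) (t t0 tN ξ : ℂ) : ℂ :=
  (1 - t ^ N) / (1 - t) * (ξ - 1) * (t0 * tN * t ^ (N - 1) - ξ⁻¹)

/-- For `λ = (m^N)` the Koornwinder eigenvalue `d_{(m^N)}`, with `s^m = ξ`
(i.e. `s = ξ^{1/m}`), equals `d₀(ξ)`; moreover `d₀` is invariant under the
Gallavotti–Cohen substitution `ξ → ξ' = t_0⁻¹ t_N⁻¹ t^{-(N-1)} ξ⁻¹`. -/
theorem stmt19 (N : ℕ) (hN : 1 ≤ N) (t t0 tN s ξ : ℂ)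
    (ht : t ≠ 0) (ht1 : t ≠ 1) (ht0 : t0 ≠ 0) (htN : tN ≠ 0) (hs : s ≠ 0) (hξ : ξ ≠ 0)
    (m : ℕ) (hm : 1 ≤ m) (hsm : s ^ m = ξ) :
    dEig N t t0 tN s m = dZero N t t0 tN ξ
      ∧ dZero N t t0 tN (t0⁻¹ * tN⁻¹ * (t ^ (N - 1))⁻¹ * ξ⁻¹) = dZero N t t0 tN ξ := by
  have ht1' : (1 : ℂ) - t ≠ 0 := sub_ne_zero.mpr (Ne.symm ht1)
  have htn : (t : ℂ) ^ (N - 1) ≠ 0 := pow_ne_zero _ ht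
  have hgeom : ∑ i ∈ range N, t ^ i = (1 - t ^ N) / (1 - t) := by
    rw [geom_sum_eq ht1]
    rw [div_eq_div_iff (sub_ne_zero.mpr ht1) ht1']
    ring
  constructor
  · have key : ∑ i ∈ range N, (t : ℂ) ^ (2 * N - i - 2)
        = t ^ (N - 1) * ∑ i ∈ range N, t ^ i := by
      rw [Finset.mul_sum]
      rw [← Finset.sum_range_reflect (fun i => t ^ (N - 1) * t ^ i) N]
      refine Finset.sum_congr rfl fun i hi => ?_
      have hiN : i < N := Finset.mem_range.mp hi
      rw [← pow_add]
      congr 1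
      omega
    unfold dEig dZero
    rw [Finset.sum_add_distrib, ← Finset.sum_mul, ← Finset.mul_sum, key, hgeom, hsm]
    have : (∑ i ∈ range N, (t:ℂ)^i) = (1 - t ^ N) / (1 - t) := hgeom
    rw [← Finset.sum_mul] at *
    rw [hgeom]
    field_simp
    ring
  · obtain ⟨k, rfl⟩ : ∃ k, N = k + 1 := ⟨N - 1, by omega⟩
    unfold dZero
    simp only [Nat.add_sub_cancel]
    have htk : (t : ℂ) ^ k ≠ 0 := pow_ne_zero _ ht
    have h : (t0⁻¹ * tN⁻¹ * (t ^ k)⁻¹ * ξ⁻¹)⁻¹ = t0 * tN * t ^ k * ξ := by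
      field_simp
    have hξ' : t0⁻¹ * tN⁻¹ * (t ^ k)⁻¹ * ξ⁻¹ = (t0 * tN * t ^ k * ξ)⁻¹ := by
      field_simp
    rw [h, hξ']
    have hmid : ((t0 * tN * t ^ k * ξ)⁻¹ - 1) * (t0 * tN * t ^ k - t0 * tN * t ^ k * ξ)
        = (ξ - 1) * (t0 * tN * t ^ k - ξ⁻¹) := by
      field_simp
      ring
    rw [mul_assoc, hmid, ← mul_assoc]
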